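/- The class of finite cographs (graphs constructible from single vertices by disjoint union and join) is exactly the class of finite graphs with no induced path on four vertices (P4-free graphs). -/

import Mathlib

/-- Terms denoting dicographs: built from single points by parallel composition `⅋`,
symmetric series composition `⊗` and directed series composition `◁`. -/
inductive DTerm (V : Type) : Type
  | leaf : V → DTerm V
  | par : DTerm V → DTerm V → DTerm V
  | tens : DTerm V → DTerm V → DTerm V
  | seq : DTerm V → DTerm V → DTerm V

namespace DTerm

/-- The list of points (leaves) of a term. -/
def leaves {V : Type} : DTerm V → List V
  | leaf v => [v]
  | par s t => leaves s ++ leaves t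
  | tens s t => leaves s ++ leaves t
  | seq s t => leaves s ++ leaves t

/-- The irreflexive binary relation (dicograph) denoted by a term:
`⅋` is disjoint union, `⊗` adds all pairs in both directions between the two domains,
`◁` adds all arcs from the first domain to the second. -/
def rel {V : Type} : DTerm V → V → V → Prop
  | leaf _ => fun _ _ => False
  | par s t => fun a b => rel s a b ∨ rel t a b
  | tens s t => fun a b =>
      rel s a b ∨ rel t a b ∨ (a ∈ leaves s ∧ b ∈ leaves t) ∨ (a ∈ leaves t ∧ b ∈ leaves s)
  | seq s t => fun a b => rel s a b ∨ rel t a b ∨ (a ∈ leaves s ∧ b ∈ leaves t)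

end DTerm

/-- `R` is a dicograph with domain `E`: it is denoted by some term with pairwise
distinct leaves (i.e. it is constructible from singletons by the three compositions). -/
def IsDicograph {V : Type} (E : Set V) (R : V → V → Prop) : Prop :=
  ∃ T : DTerm V, T.leaves.Nodup ∧ (∀ v, v ∈ T.leaves ↔ v ∈ E) ∧ (∀ a b, T.rel a b ↔ R a b)

/-- A term using only parallel composition (disjoint union) and symmetric series
composition (join): a cograph term. -/
def NoSeq {V : Type} : DTerm V → Prop
  | DTerm.leaf _ => True
  | DTerm.par s t => NoSeq s ∧ NoSeq t
  | DTerm.tens s t => NoSeq s ∧ NoSeq t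
  | DTerm.seq _ _ => False

/-- `R` is a cograph on `E`: constructible from single vertices by disjoint union
and join. -/
def IsCograph {V : Type} (E : Set V) (R : V → V → Prop) : Prop :=
  ∃ T : DTerm V, NoSeq T ∧ T.leaves.Nodup ∧
    (∀ v, v ∈ T.leaves ↔ v ∈ E) ∧ (∀ a b, T.rel a b ↔ R a b)

/-- `S` is P4-free: no four vertices induce a path `a—b—c—d`. -/
def P4Free {V : Type} (S : V → V → Prop) : Prop :=
  ¬ ∃ a b c d : V, a ≠ b ∧ a ≠ c ∧ a ≠ d ∧ b ≠ c ∧ b ≠ d ∧ c ≠ d ∧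
      S a b ∧ S b c ∧ S c d ∧ ¬ S a c ∧ ¬ S a d ∧ ¬ S b d

section CographAux

variable {V : Type}

def CgStep (E : Set V) (R : V → V → Prop) (a b : V) : Prop := a ∈ E ∧ b ∈ E ∧ R a b

def CgReach (E : Set V) (R : V → V → Prop) : V → V → Prop :=
  Relation.ReflTransGen (CgStep E R)

def CgConn (E : Set V) (R : V → V → Prop) : Prop := ∀ a ∈ E, ∀ b ∈ E, CgReach E R a b

def CgCompl (E : Set V) (R : V → V → Prop) (a b : V) : Prop :=
  a ∈ E ∧ b ∈ E ∧ a ≠ b ∧ ¬ R a b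

lemma cgReach_symm {E : Set V} {R : V → V → Prop} (hsym : ∀ a b, R a b → R b a)
    {a b : V} (h : CgReach E R a b) : CgReach E R b a := by
  induction h with
  | refl => exact Relation.ReflTransGen.refl
  | tail _ hxy ih => exact Relation.ReflTransGen.head ⟨hxy.2.1, hxy.1, hsym _ _ hxy.2.2⟩ ih

lemma cgReach_closed {E : Set V} {R : V → V → Prop} {K : Set V}
    (hcl : ∀ p q, p ∈ K → CgStep E R p q → q ∈ K) {w z : V} (hw : w ∈ K)
    (h : CgReach E R w z) : z ∈ K := by
  induction h with
  | refl => exact hw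
  | tail _ s ih => exact hcl _ _ ih s

lemma cgReach_mem {E : Set V} {R : V → V → Prop} {w z : V} (hw : w ∈ E)
    (h : CgReach E R w z) : z ∈ E :=
  cgReach_closed (K := E) (fun _ _ _ s => s.2.1) hw h

lemma cgConn_congr {E : Set V} {R S : V → V → Prop}
    (h : ∀ a b, a ∈ E → b ∈ E → (R a b ↔ S a b)) : CgConn E R ↔ CgConn E S := by
  have mono : ∀ (R S : V → V → Prop), (∀ a b, a ∈ E → b ∈ E → (R a b → S a b)) →
      ∀ a b, CgReach E R a b → CgReach E S a b := fun R S h a b hr =>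
    Relation.ReflTransGen.mono (r := CgStep E R) (p := CgStep E S)
      (fun x y (hxy : CgStep E R x y) =>
        (⟨hxy.1, hxy.2.1, h _ _ hxy.1 hxy.2.1 hxy.2.2⟩ : CgStep E S x y)) a b hr
  constructor
  · intro hc a ha b hb; exact mono R S (fun a b ha hb => (h a b ha hb).mp) a b (hc a ha b hb)
  · intro hc a ha b hb; exact mono S R (fun a b ha hb => (h a b ha hb).mpr) a b (hc a ha b hb)

lemma cgCompl_symm {E : Set V} {R : V → V → Prop} (hsym : ∀ a b, R a b → R b a) :
    ∀ a b, CgCompl E R a b → CgCompl E R b a := by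
  rintro a b ⟨ha, hb, hne, hn⟩
  exact ⟨hb, ha, hne.symm, fun h => hn (hsym _ _ h)⟩

lemma p4free_compl {E : Set V} {R : V → V → Prop} (hsym : ∀ a b, R a b → R b a)
    (hP4 : P4Free R) : P4Free (CgCompl E R) := by
  rintro ⟨a, b, c, d, hab, hac, had, hbc, hbd, hcd, eab, ebc, ecd, nac, nad, nbd⟩
  have haE := eab.1
  have hbE := eab.2.1
  have hcE := ebc.2.1
  have hdE := ecd.2.1
  have Rac : R a c := by by_contra h; exact nac ⟨haE, hcE, hac, h⟩
  have Rad : R a d := by by_contra h; exact nad ⟨haE, hdE, had, h⟩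
  have Rbd : R b d := by by_contra h; exact nbd ⟨hbE, hdE, hbd, h⟩
  exact hP4 ⟨c, a, d, b, hac.symm, hcd, hbc.symm, had, hab, hbd.symm,
    hsym _ _ Rac, Rad, hsym _ _ Rbd,
    fun h => ecd.2.2.2 h, fun h => ebc.2.2.2 (hsym _ _ h), fun h => eab.2.2.2 h⟩

lemma cg_find_pair {E : Set V} {R : V → V → Prop} (hsym : ∀ a b, R a b → R b a)
    {x y₀ : V} (hy : ¬ R x y₀) :
    ∀ {w₀ : V}, CgReach E R w₀ y₀ → R x w₀ →
    ∃ w w', w ∈ E ∧ w' ∈ E ∧ R x w ∧ ¬ R x w' ∧ R w w' ∧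
      CgReach E R y₀ w ∧ CgReach E R y₀ w' := by
  intro w₀ hpath
  induction hpath using Relation.ReflTransGen.head_induction_on with
  | refl => intro h; exact absurd h hy
  | @head a c h' h ih =>
    intro hxa
    by_cases hxc : R x c
    · exact ih hxc
    · exact ⟨a, c, h'.1, h'.2.1, hxa, hxc, h'.2.2,
        cgReach_symm hsym (Relation.ReflTransGen.head h' h),
        cgReach_symm hsym h⟩


lemma cg_step {E : Set V} {R : V → V → Prop} (hsym : ∀ a b, R a b → R b a)
    (hP4 : P4Free R) {x : V} (hx : x ∈ E)
    (hdis : ¬ CgConn (E \ {x}) R) :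
    ¬ CgConn E R ∨ ¬ CgConn E (CgCompl E R) := by
  set E' : Set V := E \ {x} with hE'
  have hE'sub : E' ⊆ E := Set.diff_subset
  unfold CgConn at hdis
  push_neg at hdis
  obtain ⟨u, hu, v, hv, huv⟩ := hdis
  by_cases hcase : ∃ w ∈ E', ∀ z ∈ E', CgReach E' R w z → ¬ R x z
  · obtain ⟨w, hw, hwz⟩ := hcase
    left
    intro hC
    have hreach := hC w (hE'sub hw) x hx
    have hxK : x ∈ {z | z ∈ E' ∧ CgReach E' R w z} := by
      refine cgReach_closed ?_ ⟨hw, Relation.ReflTransGen.refl⟩ hreach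
      rintro p q ⟨hp, hwp⟩ ⟨_, hqE, hpq⟩
      have hqx : q ≠ x := by
        rintro rfl
        exact hwz p hp hwp (hsym _ _ hpq)
      have hqE' : q ∈ E' := ⟨hqE, hqx⟩
      exact ⟨hqE', hwp.tail ⟨hp, hqE', hpq⟩⟩
    exact hxK.1.2 rfl
  · push_neg at hcase
    by_cases hall : ∀ y ∈ E', R x y
    · right
      intro hC
      have hreach := hC x hx u (hE'sub hu)
      have huK : u ∈ ({x} : Set V) := by
        refine cgReach_closed ?_ rfl hreach
        rintro p q hp ⟨_, hqE, ⟨_, _, hne, hnR⟩⟩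
        rw [Set.mem_singleton_iff] at hp
        subst hp
        exact absurd (hall q ⟨hqE, fun h => hne (Set.mem_singleton_iff.mp h).symm⟩) hnR
      exact hu.2 huK
    · push_neg at hall
      obtain ⟨y₀, hy₀, hxy₀⟩ := hall
      obtain ⟨w₀, hw₀, hyw₀, hxw₀⟩ := hcase y₀ hy₀
      obtain ⟨z, hz, hyz⟩ : ∃ z, z ∈ E' ∧ ¬ CgReach E' R y₀ z := by
        by_cases h : CgReach E' R y₀ u
        · exact ⟨v, hv, fun hv' => huv ((cgReach_symm hsym h).trans hv')⟩
        · exact ⟨u, hu, h⟩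
      obtain ⟨b₀, hb₀, hzb₀, hxb₀⟩ := hcase z hz
      obtain ⟨w, w', hwE, hw'E, hxw, hxw', hww', hyw, hyw'⟩ :=
        cg_find_pair (E := E') hsym hxy₀ (cgReach_symm hsym hyw₀) hxw₀
      have hB : ∀ t, CgReach E' R y₀ t → ¬ R b₀ t ∧ b₀ ≠ t := by
        intro t ht
        have htE : t ∈ E' := cgReach_mem hy₀ ht
        constructor
        · intro hR
          have : CgReach E' R y₀ b₀ := ht.tail ⟨htE, hb₀, hsym _ _ hR⟩
          exact hyz (this.trans (cgReach_symm hsym hzb₀))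
        · rintro rfl
          exact hyz (ht.trans (cgReach_symm hsym hzb₀))
      exact absurd ⟨b₀, x, w, w',
        hb₀.2, (hB w hyw).2, (hB w' hyw').2,
        fun h => hwE.2 h.symm, fun h => hw'E.2 h.symm,
        fun h => hxw' (h ▸ hxw),
        hsym _ _ hxb₀, hxw, hww',
        (hB w hyw).1, (hB w' hyw').1, hxw'⟩ hP4

lemma cg_seinsche {R : V → V → Prop} (hirr : ∀ a, ¬ R a a) (hsym : ∀ a b, R a b → R b a)
    (hP4 : P4Free R) :
    ∀ n : ℕ, ∀ E : Set V, E.Finite → E.ncard = n →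
      (∃ u ∈ E, ∃ v ∈ E, u ≠ v) →
      ¬ CgConn E R ∨ ¬ CgConn E (CgCompl E R) := by
  intro n
  induction n using Nat.strong_induction_on with
  | _ n IH =>
  rintro E hfin hcard ⟨u, hu, v, hv, huv⟩
  set E' : Set V := E \ {u} with hE'
  have hE'sub : E' ⊆ E := Set.diff_subset
  have hvE' : v ∈ E' := ⟨hv, fun h => huv (Set.mem_singleton_iff.mp h).symm⟩
  by_cases h2 : ∃ w ∈ E', w ≠ v
  · obtain ⟨w, hw, hwv⟩ := h2
    have hlt : E'.ncard < n := hcard ▸ Set.ncard_diff_singleton_lt_of_mem hu hfin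
    have hfin' : E'.Finite := hfin.subset hE'sub
    have hdis := IH E'.ncard hlt E' hfin' rfl ⟨w, hw, v, hvE', hwv⟩
    cases hdis with
    | inl h => exact cg_step hsym hP4 hu h
    | inr h =>
      have h' : ¬ CgConn E' (CgCompl E R) := by
        intro hC
        apply h
        refine (cgConn_congr ?_).mp hC
        intro a b ha hb
        constructor
        · rintro ⟨_, _, hne, hn⟩; exact ⟨ha, hb, hne, hn⟩
        · rintro ⟨_, _, hne, hn⟩; exact ⟨hE'sub ha, hE'sub hb, hne, hn⟩
      have hstep := cg_step (R := CgCompl E R) (cgCompl_symm hsym)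
        (p4free_compl hsym hP4) hu h'
      cases hstep with
      | inl h => exact Or.inr h
      | inr h =>
        left
        intro hC
        apply h
        refine (cgConn_congr (R := R) ?_).mp hC
        intro a b ha hb
        constructor
        · intro hR
          refine ⟨ha, hb, fun e => hirr a (e ▸ hR), ?_⟩
          rintro ⟨_, _, _, hn⟩; exact hn hR
        · rintro ⟨_, _, hne, hn⟩
          by_contra hnR
          exact hn ⟨ha, hb, hne, hnR⟩
  · -- E' = {v}, i.e. E ⊆ {u, v}
    push_neg at h2
    by_cases hR : R u v
    · right
      intro hC
      have hreach := hC u hu v hv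
      have hvK : v ∈ ({u} : Set V) := by
        refine cgReach_closed ?_ rfl hreach
        rintro p q hp ⟨_, hqE, ⟨_, _, hne, hnR⟩⟩
        rw [Set.mem_singleton_iff] at hp
        subst hp
        have hq' : q ∈ E' := ⟨hqE, fun h => hne (Set.mem_singleton_iff.mp h).symm⟩
        exact absurd (h2 q hq' ▸ hR) hnR
      exact huv (Set.mem_singleton_iff.mp hvK).symm
    · left
      intro hC
      have hreach := hC u hu v hv
      have hvK : v ∈ ({u} : Set V) := by
        refine cgReach_closed ?_ rfl hreach
        rintro p q hp ⟨_, hqE, hpq⟩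
        rw [Set.mem_singleton_iff] at hp
        by_cases hq : q = u
        · have h1 : R u q := hp ▸ hpq
          have h2q : R u u := hq ▸ h1
          exact absurd h2q (hirr u)
        · have hq' : q ∈ E' := ⟨hqE, hq⟩
          exact absurd ((h2 q hq') ▸ (hp ▸ hpq)) hR
      exact huv (Set.mem_singleton_iff.mp hvK).symm

lemma cg_split {E : Set V} {S : V → V → Prop} (hsym : ∀ a b, S a b → S b a)
    (hdis : ¬ CgConn E S) :
    ∃ A : Set V, A.Nonempty ∧ (E \ A).Nonempty ∧ A ⊆ E ∧
      (∀ a ∈ A, ∀ b ∈ E, S a b → b ∈ A) ∧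
      (∀ a ∈ E \ A, ∀ b ∈ E, S a b → b ∈ E \ A) := by
  unfold CgConn at hdis
  push_neg at hdis
  obtain ⟨p, hp, q, hq, hpq⟩ := hdis
  refine ⟨{z | z ∈ E ∧ CgReach E S p z},
    ⟨p, hp, Relation.ReflTransGen.refl⟩, ⟨q, hq, fun h => hpq h.2⟩,
    fun z hz => hz.1, ?_, ?_⟩
  · rintro a ⟨haE, hra⟩ b hb hab
    exact ⟨hb, hra.tail ⟨haE, hb, hab⟩⟩
  · rintro a ⟨haE, hna⟩ b hb hab
    exact ⟨hb, fun hbA => hna ⟨haE, hbA.2.tail ⟨hb, haE, hsym _ _ hab⟩⟩⟩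

lemma cg_build {R : V → V → Prop} (hirr : ∀ a, ¬ R a a) (hsym : ∀ a b, R a b → R b a)
    (hP4 : P4Free R) :
    ∀ n : ℕ, ∀ E : Set V, E.Finite → E.ncard = n → E.Nonempty →
      ∃ T : DTerm V, NoSeq T ∧ T.leaves.Nodup ∧
        (∀ v, v ∈ T.leaves ↔ v ∈ E) ∧
        (∀ a b, T.rel a b ↔ (a ∈ E ∧ b ∈ E ∧ R a b)) := by
  intro n
  induction n using Nat.strong_induction_on with
  | _ n IH =>
  rintro E hfin hcard ⟨u, hu⟩
  by_cases hsing : ∀ w ∈ E, w = u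
  · refine ⟨DTerm.leaf u, trivial, ?_, ?_, ?_⟩
    · simp [DTerm.leaves]
    · intro v
      simp only [DTerm.leaves, List.mem_singleton]
      exact ⟨fun e => e ▸ hu, fun h => hsing v h⟩
    · intro a b
      simp only [DTerm.rel, false_iff]
      rintro ⟨ha, hb, hab⟩
      have ea := hsing a ha
      have eb := hsing b hb
      rw [ea, eb] at hab
      exact hirr u hab
  · push_neg at hsing
    obtain ⟨v, hv, hvu⟩ := hsing
    have hsein := cg_seinsche hirr hsym hP4 E.ncard E hfin rfl ⟨u, hu, v, hv, fun e => hvu e.symm⟩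
    cases hsein with
    | inl hd =>
      obtain ⟨A, hAne, hBne, hAsub, hclA, hclB⟩ := cg_split hsym hd
      have hAfin := hfin.subset hAsub
      have hBfin := hfin.subset (Set.diff_subset (s := E) (t := A))
      have hAlt : A.ncard < n := by
        refine hcard ▸ Set.ncard_lt_ncard ?_ hfin
        obtain ⟨q, hq⟩ := hBne
        exact (Set.ssubset_iff_of_subset hAsub).mpr ⟨q, hq.1, hq.2⟩
      have hBlt : (E \ A).ncard < n := by
        refine hcard ▸ Set.ncard_lt_ncard ?_ hfin
        obtain ⟨p, hp⟩ := hAne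
        exact (Set.ssubset_iff_of_subset Set.diff_subset).mpr
          ⟨p, hAsub hp, fun h => h.2 hp⟩
      obtain ⟨Ts, nsS, ndS, memS, relS⟩ := IH A.ncard hAlt A hAfin rfl hAne
      obtain ⟨Tt, nsT, ndT, memT, relT⟩ := IH (E \ A).ncard hBlt (E \ A) hBfin rfl hBne
      refine ⟨DTerm.par Ts Tt, ⟨nsS, nsT⟩, ?_, ?_, ?_⟩
      · show (Ts.leaves ++ Tt.leaves).Nodup
        refine List.nodup_append'.mpr ⟨ndS, ndT, ?_⟩
        intro a haS haT
        exact ((memT a).mp haT).2 ((memS a).mp haS)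
      · intro w
        show w ∈ Ts.leaves ++ Tt.leaves ↔ _
        rw [List.mem_append, memS, memT]
        constructor
        · rintro (h | h)
          exacts [hAsub h, h.1]
        · intro hw
          by_cases hwA : w ∈ A
          · exact Or.inl hwA
          · exact Or.inr ⟨hw, hwA⟩
      · intro a b
        show Ts.rel a b ∨ Tt.rel a b ↔ _
        rw [relS a b, relT a b]
        constructor
        · rintro (⟨ha, hb, h⟩ | ⟨ha, hb, h⟩)
          exacts [⟨hAsub ha, hAsub hb, h⟩, ⟨ha.1, hb.1, h⟩]
        · rintro ⟨ha, hb, h⟩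
          by_cases haA : a ∈ A
          · exact Or.inl ⟨haA, hclA a haA b hb h, h⟩
          · exact Or.inr ⟨⟨ha, haA⟩, hclB a ⟨ha, haA⟩ b hb h, h⟩
    | inr hd =>
      obtain ⟨A, hAne, hBne, hAsub, hclA, hclB⟩ := cg_split (cgCompl_symm hsym) hd
      have hAfin := hfin.subset hAsub
      have hBfin := hfin.subset (Set.diff_subset (s := E) (t := A))
      have hAlt : A.ncard < n := by
        refine hcard ▸ Set.ncard_lt_ncard ?_ hfin
        obtain ⟨q, hq⟩ := hBne
        exact (Set.ssubset_iff_of_subset hAsub).mpr ⟨q, hq.1, hq.2⟩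
      have hBlt : (E \ A).ncard < n := by
        refine hcard ▸ Set.ncard_lt_ncard ?_ hfin
        obtain ⟨p, hp⟩ := hAne
        exact (Set.ssubset_iff_of_subset Set.diff_subset).mpr
          ⟨p, hAsub hp, fun h => h.2 hp⟩
      obtain ⟨Ts, nsS, ndS, memS, relS⟩ := IH A.ncard hAlt A hAfin rfl hAne
      obtain ⟨Tt, nsT, ndT, memT, relT⟩ := IH (E \ A).ncard hBlt (E \ A) hBfin rfl hBne
      have hAB : ∀ a b, a ∈ A → b ∈ E \ A → a ∈ E ∧ b ∈ E ∧ R a b := by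
        intro a b ha hb
        have haE := hAsub ha
        refine ⟨haE, hb.1, ?_⟩
        by_contra hn
        have hne : a ≠ b := fun e => hb.2 (e ▸ ha)
        exact hb.2 (hclA a ha b hb.1 ⟨haE, hb.1, hne, hn⟩)
      refine ⟨DTerm.tens Ts Tt, ⟨nsS, nsT⟩, ?_, ?_, ?_⟩
      · show (Ts.leaves ++ Tt.leaves).Nodup
        refine List.nodup_append'.mpr ⟨ndS, ndT, ?_⟩
        intro a haS haT
        exact ((memT a).mp haT).2 ((memS a).mp haS)
      · intro w
        show w ∈ Ts.leaves ++ Tt.leaves ↔ _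
        rw [List.mem_append, memS, memT]
        constructor
        · rintro (h | h)
          exacts [hAsub h, h.1]
        · intro hw
          by_cases hwA : w ∈ A
          · exact Or.inl hwA
          · exact Or.inr ⟨hw, hwA⟩
      · intro a b
        show Ts.rel a b ∨ Tt.rel a b ∨ (a ∈ Ts.leaves ∧ b ∈ Tt.leaves) ∨
          (a ∈ Tt.leaves ∧ b ∈ Ts.leaves) ↔ _
        constructor
        · rintro (h | h | ⟨ha, hb⟩ | ⟨ha, hb⟩)
          · obtain ⟨ha, hb, h⟩ := (relS a b).mp h
            exact ⟨hAsub ha, hAsub hb, h⟩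
          · obtain ⟨ha, hb, h⟩ := (relT a b).mp h
            exact ⟨ha.1, hb.1, h⟩
          · exact hAB a b ((memS a).mp ha) ((memT b).mp hb)
          · obtain ⟨h1, h2, h3⟩ := hAB b a ((memS b).mp hb) ((memT a).mp ha)
            exact ⟨h2, h1, hsym _ _ h3⟩
        · rintro ⟨ha, hb, h⟩
          by_cases haA : a ∈ A <;> by_cases hbA : b ∈ A
          · exact Or.inl ((relS a b).mpr ⟨haA, hbA, h⟩)
          · exact Or.inr (Or.inr (Or.inl ⟨(memS a).mpr haA, (memT b).mpr ⟨hb, hbA⟩⟩))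
          · exact Or.inr (Or.inr (Or.inr ⟨(memT a).mpr ⟨ha, haA⟩, (memS b).mpr hbA⟩))
          · exact Or.inr (Or.inl ((relT a b).mpr ⟨⟨ha, haA⟩, ⟨hb, hbA⟩, h⟩))

lemma rel_mem_leaves : ∀ (T : DTerm V) (a b : V), T.rel a b → a ∈ T.leaves ∧ b ∈ T.leaves := by
  intro T
  induction T with
  | leaf v => intro a b h; exact h.elim
  | par s t ihs iht =>
    intro a b h
    rcases h with h | h
    · exact ⟨List.mem_append.mpr (Or.inl (ihs a b h).1),
        List.mem_append.mpr (Or.inl (ihs a b h).2)⟩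
    · exact ⟨List.mem_append.mpr (Or.inr (iht a b h).1),
        List.mem_append.mpr (Or.inr (iht a b h).2)⟩
  | tens s t ihs iht =>
    intro a b h
    rcases h with h | h | ⟨h1, h2⟩ | ⟨h1, h2⟩
    · exact ⟨List.mem_append.mpr (Or.inl (ihs a b h).1),
        List.mem_append.mpr (Or.inl (ihs a b h).2)⟩
    · exact ⟨List.mem_append.mpr (Or.inr (iht a b h).1),
        List.mem_append.mpr (Or.inr (iht a b h).2)⟩
    · exact ⟨List.mem_append.mpr (Or.inl h1), List.mem_append.mpr (Or.inr h2)⟩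
    · exact ⟨List.mem_append.mpr (Or.inr h1), List.mem_append.mpr (Or.inl h2)⟩
  | seq s t ihs iht =>
    intro a b h
    rcases h with h | h | ⟨h1, h2⟩
    · exact ⟨List.mem_append.mpr (Or.inl (ihs a b h).1),
        List.mem_append.mpr (Or.inl (ihs a b h).2)⟩
    · exact ⟨List.mem_append.mpr (Or.inr (iht a b h).1),
        List.mem_append.mpr (Or.inr (iht a b h).2)⟩
    · exact ⟨List.mem_append.mpr (Or.inl h1), List.mem_append.mpr (Or.inr h2)⟩

lemma noseq_p4free : ∀ T : DTerm V, NoSeq T → T.leaves.Nodup → P4Free T.rel := by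
  intro T
  induction T with
  | leaf v =>
    intro _ _ h
    obtain ⟨a, b, c, d, _, _, _, _, _, _, hab, _⟩ := h
    exact hab
  | par s t ihs iht =>
    intro hns hnd
    obtain ⟨hnds, hndt, hdisj⟩ := List.nodup_append'.mp (hnd : (s.leaves ++ t.leaves).Nodup)
    rintro ⟨a, b, c, d, hab, hac, had, hbc, hbd, hcd, eab, ebc, ecd, nac, nad, nbd⟩
    rcases eab with h1 | h1
    · have hsbc : s.rel b c := by
        rcases ebc with h | h
        · exact h
        · exact absurd (rel_mem_leaves t b c h).1
            (fun ht => hdisj (rel_mem_leaves s a b h1).2 ht)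
      have hscd : s.rel c d := by
        rcases ecd with h | h
        · exact h
        · exact absurd (rel_mem_leaves t c d h).1
            (fun ht => hdisj (rel_mem_leaves s b c hsbc).2 ht)
      exact ihs hns.1 hnds ⟨a, b, c, d, hab, hac, had, hbc, hbd, hcd, h1, hsbc, hscd,
        fun h => nac (Or.inl h), fun h => nad (Or.inl h), fun h => nbd (Or.inl h)⟩
    · have htbc : t.rel b c := by
        rcases ebc with h | h
        · exact absurd (rel_mem_leaves s b c h).1
            (fun hs => hdisj hs (rel_mem_leaves t a b h1).2)
        · exact h
      have htcd : t.rel c d := by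
        rcases ecd with h | h
        · exact absurd (rel_mem_leaves s c d h).1
            (fun hs => hdisj hs (rel_mem_leaves t b c htbc).2)
        · exact h
      exact iht hns.2 hndt ⟨a, b, c, d, hab, hac, had, hbc, hbd, hcd, h1, htbc, htcd,
        fun h => nac (Or.inr h), fun h => nad (Or.inr h), fun h => nbd (Or.inr h)⟩
  | tens s t ihs iht =>
    intro hns hnd
    obtain ⟨hnds, hndt, hdisj⟩ := List.nodup_append'.mp (hnd : (s.leaves ++ t.leaves).Nodup)
    rintro ⟨a, b, c, d, hab, hac, had, hbc, hbd, hcd, eab, ebc, ecd, nac, nad, nbd⟩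
    have ma := List.mem_append.mp (rel_mem_leaves _ a b eab).1
    have mb := List.mem_append.mp (rel_mem_leaves _ a b eab).2
    have mc := List.mem_append.mp (rel_mem_leaves _ b c ebc).2
    have md := List.mem_append.mp (rel_mem_leaves _ c d ecd).2
    rcases ma with haS | haT
    · have hcS : c ∈ s.leaves := by
        rcases mc with h | h
        · exact h
        · exact absurd (show (DTerm.tens s t).rel a c from
            Or.inr (Or.inr (Or.inl ⟨haS, h⟩))) nac
      have hdS : d ∈ s.leaves := by
        rcases md with h | h
        · exact h
        · exact absurd (show (DTerm.tens s t).rel a d from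
            Or.inr (Or.inr (Or.inl ⟨haS, h⟩))) nad
      have hbS : b ∈ s.leaves := by
        rcases mb with h | h
        · exact h
        · exact absurd (show (DTerm.tens s t).rel b d from
            Or.inr (Or.inr (Or.inr ⟨h, hdS⟩))) nbd
      have esab : s.rel a b := by
        rcases eab with h | h | ⟨h1, h2⟩ | ⟨h1, h2⟩
        · exact h
        · exact absurd (rel_mem_leaves t a b h).1 (fun ht => hdisj haS ht)
        · exact absurd h2 (fun ht => hdisj hbS ht)
        · exact absurd h1 (fun ht => hdisj haS ht)
      have esbc : s.rel b c := by
        rcases ebc with h | h | ⟨h1, h2⟩ | ⟨h1, h2⟩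
        · exact h
        · exact absurd (rel_mem_leaves t b c h).1 (fun ht => hdisj hbS ht)
        · exact absurd h2 (fun ht => hdisj hcS ht)
        · exact absurd h1 (fun ht => hdisj hbS ht)
      have escd : s.rel c d := by
        rcases ecd with h | h | ⟨h1, h2⟩ | ⟨h1, h2⟩
        · exact h
        · exact absurd (rel_mem_leaves t c d h).1 (fun ht => hdisj hcS ht)
        · exact absurd h2 (fun ht => hdisj hdS ht)
        · exact absurd h1 (fun ht => hdisj hcS ht)
      exact ihs hns.1 hnds ⟨a, b, c, d, hab, hac, had, hbc, hbd, hcd, esab, esbc, escd,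
        fun h => nac (Or.inl h), fun h => nad (Or.inl h), fun h => nbd (Or.inl h)⟩
    · have hcT : c ∈ t.leaves := by
        rcases mc with h | h
        · exact absurd (show (DTerm.tens s t).rel a c from
            Or.inr (Or.inr (Or.inr ⟨haT, h⟩))) nac
        · exact h
      have hdT : d ∈ t.leaves := by
        rcases md with h | h
        · exact absurd (show (DTerm.tens s t).rel a d from
            Or.inr (Or.inr (Or.inr ⟨haT, h⟩))) nad
        · exact h
      have hbT : b ∈ t.leaves := by
        rcases mb with h | h
        · exact absurd (show (DTerm.tens s t).rel b d from
            Or.inr (Or.inr (Or.inl ⟨h, hdT⟩))) nbd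
        · exact h
      have etab : t.rel a b := by
        rcases eab with h | h | ⟨h1, h2⟩ | ⟨h1, h2⟩
        · exact absurd (rel_mem_leaves s a b h).1 (fun hs => hdisj hs haT)
        · exact h
        · exact absurd h1 (fun hs => hdisj hs haT)
        · exact absurd h2 (fun hs => hdisj hs hbT)
      have etbc : t.rel b c := by
        rcases ebc with h | h | ⟨h1, h2⟩ | ⟨h1, h2⟩
        · exact absurd (rel_mem_leaves s b c h).1 (fun hs => hdisj hs hbT)
        · exact h
        · exact absurd h1 (fun hs => hdisj hs hbT)
        · exact absurd h2 (fun hs => hdisj hs hcT)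
      have etcd : t.rel c d := by
        rcases ecd with h | h | ⟨h1, h2⟩ | ⟨h1, h2⟩
        · exact absurd (rel_mem_leaves s c d h).1 (fun hs => hdisj hs hcT)
        · exact h
        · exact absurd h1 (fun hs => hdisj hs hcT)
        · exact absurd h2 (fun hs => hdisj hs hdT)
      exact iht hns.2 hndt ⟨a, b, c, d, hab, hac, had, hbc, hbd, hcd, etab, etbc, etcd,
        fun h => nac (Or.inr (Or.inl h)), fun h => nad (Or.inr (Or.inl h)),
        fun h => nbd (Or.inr (Or.inl h))⟩
  | seq s t ihs iht =>
    intro hns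
    cases hns

end CographAux

/-- the finite cographs are exactly the finite P4-free graphs. -/
theorem cograph_iff_P4Free {V : Type} (E : Set V) (R : V → V → Prop)
    (hfin : E.Finite) (hne : E.Nonempty)
    (hirr : ∀ a, ¬ R a a) (hsym : ∀ a b, R a b → R b a)
    (hsupp : ∀ a b, R a b → a ∈ E ∧ b ∈ E) :
    IsCograph E R ↔ P4Free R := by
  constructor
  · rintro ⟨T, hns, hnd, hmem, hrel⟩
    have hP := noseq_p4free T hns hnd
    rintro ⟨a, b, c, d, h1, h2, h3, h4, h5, h6, hab, hbc, hcd, nac, nad, nbd⟩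
    exact hP ⟨a, b, c, d, h1, h2, h3, h4, h5, h6, (hrel a b).mpr hab, (hrel b c).mpr hbc,
      (hrel c d).mpr hcd, fun h => nac ((hrel a c).mp h), fun h => nad ((hrel a d).mp h),
      fun h => nbd ((hrel b d).mp h)⟩
  · intro hP4
    obtain ⟨T, hns, hnd, hmem, hrel⟩ := cg_build hirr hsym hP4 E.ncard E hfin rfl hne
    exact ⟨T, hns, hnd, hmem, fun a b => (hrel a b).trans
      ⟨fun h => h.2.2, fun h => ⟨(hsupp a b h).1, (hsupp a b h).2, h⟩⟩⟩
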